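/- Let (R, m) be a commutative Noetherian local ring and let I be a nonzero proper ideal of R that is weakly m-full and satisfies depth(R/I) = 0. Then m(I : m) ≠ mI. -/
import Mathlib


open IsLocalRing

/-- If `I` is a nonzero proper weakly `m`-full ideal of a commutative Noetherian local
ring `(R, m)` with `depth(R/I) = 0` (equivalently `(I : m) ≠ I`), then
`m(I : m) ≠ mI`. -/
theorem stmt3 (R : Type*) [CommRing R] [IsNoetherianRing R] [IsLocalRing R]
    (I : Ideal R) (hI0 : I ≠ ⊥) (hI : I ≠ ⊤)
    (hwmf : Submodule.colon (maximalIdeal R * I) (maximalIdeal R) = I)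
    (hdepth : Submodule.colon I (maximalIdeal R) ≠ I) :
    maximalIdeal R * Submodule.colon I (maximalIdeal R) ≠ maximalIdeal R * I := by
  intro h
  apply hdepth
  apply le_antisymm
  · intro x hx
    rw [← hwmf, Submodule.mem_colon]
    intro p hp
    rw [← h, smul_eq_mul]
    exact mul_comm p x ▸ Ideal.mul_mem_mul hp hx
  · intro x hx
    rw [Submodule.mem_colon]
    intro p hp
    rw [smul_eq_mul]
    exact I.mul_mem_right p hx
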